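/- Let n ≥ 3 be an odd integer. Put v = Σ_{i=1}^n e_{{i}} ⊗ ẽ_{n+i} and w = Σ_{j=1}^n ẽ_{n+j} ⊗ e_{{j}}, both elements of S ⊗ S ⊗ S, and equip S ⊗ S ⊗ S with the inner product making the vectors e_A ⊗ e_B ⊗ e_C (A,B,C ⊆ {1,…,n}) orthonormal. Then ⟨v, w⟩ = (−1)^{(n+1)/2} · n · (n−1). -/

import Mathlib

open scoped Classical

noncomputable section

/-- Subsets of `{1,…,n}`, the index set for the basis of the spinor space `S`. -/
abbrev SIdx (n : ℕ) : Type := {X : Finset ℕ // X ∈ (Finset.Icc 1 n).powerset}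

/-- `I₁(X) = Σ_{k∈X} k − |X|·n`. -/
def I1 (n : ℕ) (X : Finset ℕ) : ℤ := (∑ k ∈ X, (k : ℤ)) - X.card * n

/-- `I_{n+i}(X) = I₁(X) + |{k ∈ X : k < i}| − (n−1)`. -/
def Ihigh (n i : ℕ) (X : Finset ℕ) : ℤ :=
  I1 n X + ((X.filter (fun k => k < i)).card : ℤ) - ((n : ℤ) - 1)

/-- The coefficient of `e_{X′} ⊗ e_{X″}` in
`ẽ_{n+i} = (−1)^i Σ_{(X′,X″)∈Ω_{n+i}} σ_{n+i}(X′) e_{X′} ⊗ e_{X″}`, where `Ω_{n+i}` consists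
of pairs of disjoint sets with `X′ ∪ X″ = {1,…,n} ∖ {i}` and `|X′|` odd, and
`σ_{n+i}(X) = (−1)^{I_{n+i}(X)}`. -/
def tildeCoef (n i : ℕ) (X' X'' : Finset ℕ) : ℂ :=
  if X' ∪ X'' = (Finset.Icc 1 n) \ {i} ∧ Disjoint X' X'' ∧ Odd X'.card then
    ((-1 : ℂ) ^ i) * ((-1 : ℂ) ^ (Ihigh n i X'))
  else 0

/-- `S ⊗ S ⊗ S` with the inner product making the `e_A ⊗ e_B ⊗ e_C` orthonormal. -/
abbrev T3 (n : ℕ) : Type := EuclideanSpace ℂ (SIdx n × SIdx n × SIdx n)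

/-- `v = Σ_{i=1}^n e_{{i}} ⊗ ẽ_{n+i}` in coordinates w.r.t. the basis `e_A ⊗ e_B ⊗ e_C`. -/
def vVec (n : ℕ) : T3 n := WithLp.toLp 2 fun (p : SIdx n × SIdx n × SIdx n) =>
  ∑ i ∈ Finset.Icc 1 n,
    if (p.1 : Finset ℕ) = {i} then tildeCoef n i (p.2.1 : Finset ℕ) (p.2.2 : Finset ℕ) else 0

/-- `w = Σ_{j=1}^n ẽ_{n+j} ⊗ e_{{j}}` in coordinates w.r.t. the basis `e_A ⊗ e_B ⊗ e_C`. -/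
def wVec (n : ℕ) : T3 n := WithLp.toLp 2 fun (p : SIdx n × SIdx n × SIdx n) =>
  ∑ j ∈ Finset.Icc 1 n,
    if (p.2.2 : Finset ℕ) = {j} then tildeCoef n j (p.1 : Finset ℕ) (p.2.1 : Finset ℕ) else 0

lemma negOne_zpow_congr (a b : ℤ) (h : (a - b) % 2 = 0) : (-1:ℂ)^a = (-1:ℂ)^b := by
  obtain ⟨k, hk⟩ : ∃ k, a = b + 2*k := ⟨(a-b)/2, by omega⟩
  rw [hk, zpow_add₀ (by norm_num : (-1:ℂ) ≠ 0), zpow_mul]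
  norm_num

lemma gauss (n : ℕ) : (∑ k ∈ Finset.Icc 1 n, (k:ℤ)) * 2 = (n+1)*n := by
  have h : Finset.range (n+1) = insert 0 (Finset.Icc 1 n) := by ext k; simp; omega
  have h0 : (0:ℕ) ∉ Finset.Icc 1 n := by simp
  have key := Finset.sum_range_id_mul_two (n+1)
  rw [h, Finset.sum_insert h0] at key
  simp only [Nat.add_sub_cancel, zero_add] at key
  have : (((∑ x ∈ Finset.Icc 1 n, x) * 2 : ℕ) : ℤ) = (((n+1)*n : ℕ) : ℤ) := by exact_mod_cast key
  push_cast at this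
  linarith

lemma keyDiag (n i : ℕ) (B : Finset ℕ) : tildeCoef n i B {i} = 0 := by
  unfold tildeCoef
  rw [if_neg]
  rintro ⟨h1, _, _⟩
  have hi : i ∈ B ∪ {i} := by simp
  rw [h1] at hi
  simp at hi

lemma keyPair (n : ℕ) (hn : 3 ≤ n) (m : ℕ) (hm : n = 2*m+1) (i j : ℕ)
    (hi : i ∈ Finset.Icc 1 n) (hj : j ∈ Finset.Icc 1 n) (hne : i ≠ j) :
    (∑ B ∈ (Finset.Icc 1 n).powerset,
       (starRingEnd ℂ) (tildeCoef n i B {j}) * tildeCoef n j {i} B)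
      = (-1:ℂ)^((n+1)/2) := by
  simp only [Finset.mem_Icc] at hi hj
  set B0 : Finset ℕ := Finset.Icc 1 n \ {i, j} with hB0
  have hB0mem : B0 ∈ (Finset.Icc 1 n).powerset :=
    Finset.mem_powerset.2 Finset.sdiff_subset
  rw [Finset.sum_eq_single_of_mem B0 hB0mem ?side]
  case side =>
    intro b hb hbne
    have hz : tildeCoef n i b {j} = 0 := by
      unfold tildeCoef
      rw [if_neg]
      rintro ⟨h1, h2, _⟩
      apply hbne
      have hb' : b = (Finset.Icc 1 n \ {i}) \ {j} := by
        rw [← h1, Finset.union_sdiff_cancel_right h2]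
      rw [hb', hB0]
      ext k
      simp only [Finset.mem_sdiff, Finset.mem_insert, Finset.mem_singleton]
      tauto
    rw [hz, map_zero, zero_mul]
  -- main term
  have hcond1 : B0 ∪ {j} = Finset.Icc 1 n \ {i} := by
    ext k
    simp only [hB0, Finset.mem_union, Finset.mem_sdiff, Finset.mem_insert,
      Finset.mem_singleton, Finset.mem_Icc]
    omega
  have hdis1 : Disjoint B0 {j} := by
    simp only [Finset.disjoint_singleton_right, hB0, Finset.mem_sdiff, Finset.mem_insert,
      Finset.mem_singleton, Finset.mem_Icc]
    tauto
  have hsub2 : ({i, j} : Finset ℕ) ⊆ Finset.Icc 1 n := by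
    intro k
    simp only [Finset.mem_insert, Finset.mem_singleton, Finset.mem_Icc]
    rintro (rfl | rfl) <;> omega
  have hcardB0 : B0.card = n - 2 := by
    rw [hB0, Finset.card_sdiff_of_subset hsub2, Nat.card_Icc, Finset.card_pair hne]
    omega
  have hodd1 : Odd B0.card := by rw [hcardB0]; exact ⟨m-1, by omega⟩
  have hcond2 : {i} ∪ B0 = Finset.Icc 1 n \ {j} := by
    ext k
    simp only [hB0, Finset.mem_union, Finset.mem_sdiff, Finset.mem_insert,
      Finset.mem_singleton, Finset.mem_Icc]
    omega
  have hdis2 : Disjoint ({i} : Finset ℕ) B0 := by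
    simp only [Finset.disjoint_singleton_left, hB0, Finset.mem_sdiff, Finset.mem_insert,
      Finset.mem_singleton, Finset.mem_Icc]
    tauto
  have hodd2 : Odd ({i} : Finset ℕ).card := by simp
  unfold tildeCoef
  rw [if_pos ⟨hcond1, hdis1, hodd1⟩, if_pos ⟨hcond2, hdis2, hodd2⟩]
  -- numerics
  have hc1 : ((B0.filter (fun k => k < i)).card : ℤ) = (i:ℤ) - 1 - (if j < i then 1 else 0) := by
    by_cases hji : j < i
    · rw [if_pos hji]
      have he : B0.filter (fun k => k < i) = (Finset.Icc 1 (i-1)).erase j := by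
        ext k
        simp only [hB0, Finset.mem_filter, Finset.mem_sdiff, Finset.mem_insert,
          Finset.mem_singleton, Finset.mem_Icc, Finset.mem_erase]
        omega
      rw [he, Finset.card_erase_of_mem (by simp only [Finset.mem_Icc]; omega), Nat.card_Icc]
      omega
    · rw [if_neg hji]
      have he : B0.filter (fun k => k < i) = Finset.Icc 1 (i-1) := by
        ext k
        simp only [hB0, Finset.mem_filter, Finset.mem_sdiff, Finset.mem_insert,
          Finset.mem_singleton, Finset.mem_Icc]
        omega
      rw [he, Nat.card_Icc]
      omega
  have hc2 : ((({i} : Finset ℕ).filter (fun k => k < j)).card : ℤ) = if i < j then 1 else 0 := by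
    rw [Finset.filter_singleton]
    by_cases h : i < j <;> simp [h]
  have hsumB0 : (∑ k ∈ B0, (k:ℤ)) = (2*(m:ℤ)+1)*((m:ℤ)+1) - i - j := by
    have h1 := Finset.sum_sdiff (f := fun k : ℕ => (k:ℤ)) hsub2
    have h2 : (∑ k ∈ ({i,j} : Finset ℕ), (k:ℤ)) = (i:ℤ) + j := Finset.sum_pair hne
    have h3 := gauss n
    have hn' : (n:ℤ) = 2*m+1 := by exact_mod_cast congrArg (Nat.cast : ℕ → ℤ) hm
    have h4 : (∑ k ∈ Finset.Icc 1 n, (k:ℤ)) = (2*(m:ℤ)+1)*((m:ℤ)+1) := by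
      have : ((n:ℤ)+1)*n = ((2*(m:ℤ)+1)*((m:ℤ)+1))*2 := by rw [hn']; ring
      linarith
    rw [← hB0] at h1
    rw [h2, h4] at h1
    linarith
  have hcardB0' : (B0.card : ℤ) = (n:ℤ) - 2 := by rw [hcardB0]; omega
  have hE1 : Ihigh n i B0 = ((2*(m:ℤ)+1)*((m:ℤ)+1) - i - j) - ((n:ℤ)-2)*n
      + ((i:ℤ) - 1 - (if j < i then 1 else 0)) - ((n:ℤ)-1) := by
    unfold Ihigh I1
    rw [hsumB0, hcardB0', hc1]
  have hE2 : Ihigh n j {i} = (i:ℤ) - n + (if i < j then 1 else 0) - ((n:ℤ)-1) := by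
    unfold Ihigh I1
    rw [hc2]
    simp
    try ring
  have hconj : ∀ (a : ℕ) (t : ℤ),
      (starRingEnd ℂ) ((-1:ℂ)^a * (-1:ℂ)^t) = (-1:ℂ)^(a:ℤ) * (-1:ℂ)^t := by
    intro a t
    rw [map_mul, map_pow, map_zpow₀]
    simp [zpow_natCast]
  rw [hconj]
  rw [show ((-1:ℂ)^j) = (-1:ℂ)^(j:ℤ) from (zpow_natCast _ _).symm]
  rw [show ((-1:ℂ)^((n+1)/2)) = (-1:ℂ)^((((n+1)/2 : ℕ)):ℤ) from (zpow_natCast _ _).symm]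
  have h0 : (-1:ℂ) ≠ 0 := by norm_num
  rw [← zpow_add₀ h0, ← zpow_add₀ h0, ← zpow_add₀ h0]
  apply negOne_zpow_congr
  rw [hE1, hE2]
  have hn' : (n:ℤ) = 2*m+1 := by exact_mod_cast congrArg (Nat.cast : ℕ → ℤ) hm
  have hhalf : (((n+1)/2 : ℕ) : ℤ) = (m:ℤ) + 1 := by omega
  rw [hhalf, hn']
  have e1 : ((2*(m:ℤ)+1)*((m:ℤ)+1)) = 2*((m:ℤ)*(m:ℤ)) + 3*m + 1 := by ring
  have e2 : ((2*(m:ℤ)+1)-2)*(2*(m:ℤ)+1) = 4*((m:ℤ)*(m:ℤ)) - 1 := by ring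
  rw [e1, e2]
  generalize (m:ℤ)*(m:ℤ) = q
  split_ifs <;> omega

lemma sum_subtype_powerset (n : ℕ) (f : Finset ℕ → ℂ) :
    (∑ A : SIdx n, f (A : Finset ℕ)) = ∑ A ∈ (Finset.Icc 1 n).powerset, f A :=
  (Finset.sum_subtype _ (fun _ => Iff.rfl) f).symm

lemma sum_subtype3 (n : ℕ) (f : Finset ℕ → Finset ℕ → Finset ℕ → ℂ) :
    (∑ a : SIdx n, ∑ b : SIdx n, ∑ c : SIdx n, f (a : Finset ℕ) (b : Finset ℕ) (c : Finset ℕ))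
    = ∑ a ∈ (Finset.Icc 1 n).powerset, ∑ b ∈ (Finset.Icc 1 n).powerset,
        ∑ c ∈ (Finset.Icc 1 n).powerset, f a b c := by
  rw [sum_subtype_powerset n (fun a => ∑ b : SIdx n, ∑ c : SIdx n, f a ↑b ↑c)]
  refine Finset.sum_congr rfl fun a _ => ?_
  rw [sum_subtype_powerset n (fun b => ∑ c : SIdx n, f a b ↑c)]
  refine Finset.sum_congr rfl fun b _ => ?_
  exact sum_subtype_powerset n (fun c => f a b c)


/-- `⟨v, w⟩ = (−1)^{(n+1)/2} · n · (n−1)` (Proposition A.2). -/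
theorem stmt7 (n : ℕ) (hn : 3 ≤ n) (hodd : Odd n) :
    (inner ℂ (vVec n) (wVec n) : ℂ)
      = (-1 : ℂ) ^ ((n + 1) / 2) * (n : ℂ) * ((n : ℂ) - 1) := by
  obtain ⟨m, hm⟩ := hodd
  rw [PiLp.inner_apply]
  simp only [RCLike.inner_apply']
  simp only [vVec, wVec, PiLp.toLp_apply, map_sum, apply_ite (starRingEnd ℂ), map_zero, Finset.sum_mul_sum]
  rw [Finset.sum_comm]
  rw [Finset.sum_congr rfl (fun i (_ : i ∈ Finset.Icc 1 n) => Finset.sum_comm)]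
  have step : ∀ i ∈ Finset.Icc 1 n, ∀ j ∈ Finset.Icc 1 n,
      (∑ p : SIdx n × SIdx n × SIdx n,
        (if (p.1 : Finset ℕ) = {i} then
            (starRingEnd ℂ) (tildeCoef n i (p.2.1 : Finset ℕ) (p.2.2 : Finset ℕ)) else 0) *
        (if (p.2.2 : Finset ℕ) = {j} then
            tildeCoef n j (p.1 : Finset ℕ) (p.2.1 : Finset ℕ) else 0))
      = if i = j then 0 else (-1:ℂ)^((n+1)/2) := by
    intro i hi j hj
    have hmemi : ({i} : Finset ℕ) ∈ (Finset.Icc 1 n).powerset := by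
      rw [Finset.mem_powerset, Finset.singleton_subset_iff]; exact hi
    have hmemj : ({j} : Finset ℕ) ∈ (Finset.Icc 1 n).powerset := by
      rw [Finset.mem_powerset, Finset.singleton_subset_iff]; exact hj
    simp only [Fintype.sum_prod_type]
    rw [sum_subtype3 n (fun A B C =>
      (if A = {i} then (starRingEnd ℂ) (tildeCoef n i B C) else 0) *
      (if C = {j} then tildeCoef n j A B else 0))]
    by_cases hij : i = j
    · subst hij
      rw [if_pos rfl]
      refine Finset.sum_eq_zero fun A _ => Finset.sum_eq_zero fun B _ =>
        Finset.sum_eq_zero fun C _ => ?_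
      by_cases h2 : C = ({i} : Finset ℕ)
      · rw [h2, keyDiag, map_zero]
        simp
      · rw [if_neg h2, mul_zero]
    · rw [if_neg hij]
      rw [Finset.sum_eq_single_of_mem ({i} : Finset ℕ) hmemi (fun b _ hbne =>
        Finset.sum_eq_zero fun B _ => Finset.sum_eq_zero fun C _ => by
          rw [if_neg hbne, zero_mul])]
      simp only [eq_self_iff_true, if_true]
      have inner2 : ∀ B ∈ (Finset.Icc 1 n).powerset,
          (∑ C ∈ (Finset.Icc 1 n).powerset,
            (starRingEnd ℂ) (tildeCoef n i B C) * (if C = {j} then tildeCoef n j {i} B else 0))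
          = (starRingEnd ℂ) (tildeCoef n i B {j}) * tildeCoef n j {i} B := by
        intro B _
        simp only [mul_ite, mul_zero]
        rw [Finset.sum_ite_eq' _ ({j} : Finset ℕ)
          (fun C => (starRingEnd ℂ) (tildeCoef n i B C) * tildeCoef n j {i} B), if_pos hmemj]
      rw [Finset.sum_congr rfl inner2]
      exact keyPair n hn m hm i j hi hj hij
  rw [Finset.sum_congr rfl (fun i hi => Finset.sum_congr rfl (fun j hj => step i hi j hj))]
  have innerSum : ∀ i ∈ Finset.Icc 1 n,
      (∑ j ∈ Finset.Icc 1 n, (if i = j then (0:ℂ) else (-1:ℂ)^((n+1)/2)))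
      = (n:ℂ) * (-1:ℂ)^((n+1)/2) - (-1:ℂ)^((n+1)/2) := by
    intro i hi
    have hpt : ∀ j, (if i = j then (0:ℂ) else (-1:ℂ)^((n+1)/2))
        = (-1:ℂ)^((n+1)/2) - (if i = j then (-1:ℂ)^((n+1)/2) else 0) := by
      intro j; split_ifs <;> ring
    simp only [hpt]
    rw [Finset.sum_sub_distrib, Finset.sum_const, Finset.sum_ite_eq, if_pos hi, Nat.card_Icc]
    simp only [Nat.add_sub_cancel, nsmul_eq_mul]
  rw [Finset.sum_congr rfl innerSum, Finset.sum_const, Nat.card_Icc]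
  simp only [Nat.add_sub_cancel, nsmul_eq_mul]
  ring

end
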